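/- Let s1, S1, h be rational numbers with S1 ≠ 0, let t1 = (S1^2 − h)/S1, suppose 2h + 3(s1+t1)(t1−S1) ≠ 0 and S1^2 + 3S1·s1 − 3h ≠ 0, and define t2 = [−h^2 + (s1^2 + s1·S1 + S1^2)h + (s1+t1)(t1−S1)(s1^2 + (t1−S1)s1 + t1^2 − t1·S1 + S1^2)] / (2h + 3(s1+t1)(t1−S1)). Then t1^2 − 4t2 = (S1^2 − S1·s1 + h)(S1^2 + 2S1·s1 − h)^2 / (S1^2·(S1^2 + 3S1·s1 − 3h)). -/

import Mathlib

theorem stmt_5 (s₁ S₁ h t₁ t₂ : ℚ) (hS₁ : S₁ ≠ 0)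
    (ht₁ : t₁ = (S₁ ^ 2 - h) / S₁)
    (hden : 2 * h + 3 * (s₁ + t₁) * (t₁ - S₁) ≠ 0)
    (hden2 : S₁ ^ 2 + 3 * S₁ * s₁ - 3 * h ≠ 0)
    (ht₂ : t₂ = (-h ^ 2 + (s₁ ^ 2 + s₁ * S₁ + S₁ ^ 2) * h +
        (s₁ + t₁) * (t₁ - S₁) *
          (s₁ ^ 2 + (t₁ - S₁) * s₁ + t₁ ^ 2 - t₁ * S₁ + S₁ ^ 2)) /
      (2 * h + 3 * (s₁ + t₁) * (t₁ - S₁))) :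
    t₁ ^ 2 - 4 * t₂ =
      (S₁ ^ 2 - S₁ * s₁ + h) * (S₁ ^ 2 + 2 * S₁ * s₁ - h) ^ 2 /
        (S₁ ^ 2 * (S₁ ^ 2 + 3 * S₁ * s₁ - 3 * h)) := by
  have hh : h = S₁ ^ 2 - t₁ * S₁ := by
    rw [ht₁]; field_simp; ring
  subst hh ht₂
  have hE : S₁ ^ 2 * (S₁ ^ 2 + 3 * S₁ * s₁ - 3 * (S₁ ^ 2 - t₁ * S₁)) ≠ 0 :=
    mul_ne_zero (pow_ne_zero 2 hS₁) hden2
  have key := div_mul_cancel₀ (-(S₁ ^ 2 - t₁ * S₁) ^ 2 + (s₁ ^ 2 + s₁ * S₁ + S₁ ^ 2) * (S₁ ^ 2 - t₁ * S₁) +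
                (s₁ + t₁) * (t₁ - S₁) * (s₁ ^ 2 + (t₁ - S₁) * s₁ + t₁ ^ 2 - t₁ * S₁ + S₁ ^ 2)) hden
  rw [eq_div_iff hE]
  apply mul_right_cancel₀ hden
  linear_combination (-4 * (S₁ ^ 2 * (S₁ ^ 2 + 3 * S₁ * s₁ - 3 * (S₁ ^ 2 - t₁ * S₁)))) * key
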